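/- If A ∈ C^{m×n} has full rank (rank A = min(m,n)), then J(X) = (1/2)‖(X−A)A†‖_F² + (1/2)‖A†(X−A)‖_F² is strictly convex in X on C^{m×n}. -/

import Mathlib

open Matrix

/-- The four Penrose conditions characterizing the Moore-Penrose pseudoinverse. -/
def IsMoorePenrose {m n : Type*} [Fintype m] [Fintype n]
    (A : Matrix m n ℂ) (B : Matrix n m ℂ) : Prop :=
  A * B * A = A ∧ B * A * B = B ∧ (A * B)ᴴ = A * B ∧ (B * A)ᴴ = B * A

/-- The Frobenius norm of a complex matrix. -/
noncomputable def frob {m n : Type*} [Fintype m] [Fintype n] (M : Matrix m n ℂ) : ℝ :=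
  Real.sqrt (∑ i, ∑ j, ‖M i j‖ ^ 2)

/-- The misfit functional J(X) = (1/2)‖(X−A)A†‖_F² + (1/2)‖A†(X−A)‖_F². -/
noncomputable def Jfun {m n : Type*} [Fintype m] [Fintype n]
    (A : Matrix m n ℂ) (Ad : Matrix n m ℂ) (X : Matrix m n ℂ) : ℝ :=
  (1 / 2) * frob ((X - A) * Ad) ^ 2 + (1 / 2) * frob (Ad * (X - A)) ^ 2

/-- Sum of squared absolute values of the entries. -/
noncomputable def Fsq {m n : Type*} [Fintype m] [Fintype n] (M : Matrix m n ℂ) : ℝ :=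
  ∑ i, ∑ j, ‖M i j‖ ^ 2

lemma frob_sq {m n : Type*} [Fintype m] [Fintype n] (M : Matrix m n ℂ) :
    frob M ^ 2 = Fsq M := by
  rw [frob, Fsq, Real.sq_sqrt]
  positivity

lemma Fsq_nonneg {m n : Type*} [Fintype m] [Fintype n] (M : Matrix m n ℂ) : 0 ≤ Fsq M := by
  unfold Fsq; positivity

lemma Fsq_eq_zero {m n : Type*} [Fintype m] [Fintype n] {M : Matrix m n ℂ}
    (h : Fsq M = 0) : M = 0 := by
  unfold Fsq at h
  ext i j
  have h1 : ∀ i ∈ (Finset.univ : Finset m), (0:ℝ) ≤ ∑ j, ‖M i j‖ ^ 2 := by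
    intro i _; positivity
  have h2 := (Finset.sum_eq_zero_iff_of_nonneg h1).mp h i (Finset.mem_univ i)
  have h3 : ∀ j ∈ (Finset.univ : Finset n), (0:ℝ) ≤ ‖M i j‖ ^ 2 := by
    intro j _; positivity
  have h4 := (Finset.sum_eq_zero_iff_of_nonneg h3).mp h2 j (Finset.mem_univ j)
  have : ‖M i j‖ = 0 := by nlinarith [norm_nonneg (M i j)]
  simpa using this

lemma abs_combo (a b : ℝ) (hab : a + b = 1) (z w : ℂ) :
    ‖a • z + b • w‖ ^ 2
      = a * ‖z‖ ^ 2 + b * ‖w‖ ^ 2 - a * b * ‖z - w‖ ^ 2 := by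
  simp only [Complex.sq_norm, Complex.normSq_apply, Complex.add_re, Complex.add_im,
    Complex.smul_re, Complex.smul_im, Complex.sub_re, Complex.sub_im, smul_eq_mul]
  linear_combination (a * (z.re^2+z.im^2) + b * (w.re^2+w.im^2)) * hab

lemma Fsq_combo {m n : Type*} [Fintype m] [Fintype n] (a b : ℝ) (hab : a + b = 1)
    (U V : Matrix m n ℂ) :
    Fsq (a • U + b • V) = a * Fsq U + b * Fsq V - a * b * Fsq (U - V) := by
  unfold Fsq
  rw [show (∑ i, ∑ j, ‖(a • U + b • V) i j‖ ^ 2)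
      = ∑ i, ∑ j, (a * ‖U i j‖ ^ 2 + b * ‖V i j‖ ^ 2
          - a * b * ‖(U - V) i j‖ ^ 2) from
    Finset.sum_congr rfl fun i _ => Finset.sum_congr rfl fun j _ => by
      simpa using abs_combo a b hab (U i j) (V i j)]
  simp only [Finset.sum_sub_distrib, Finset.sum_add_distrib, Finset.mul_sum]

lemma proj_eq_of_full_rank {p q : Type*} [Fintype p] [Fintype q] (P : Matrix p p ℂ)
    (hidem : P * P = P) (hr : P.rank = Fintype.card p) (Z : Matrix p q ℂ) : P * Z = Z := by
  have hsurj : LinearMap.range P.mulVecLin = ⊤ := by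
    apply Submodule.eq_top_of_finrank_eq
    rw [← Matrix.rank, hr, Module.finrank_fintype_fun_eq_card]
  have hfix : ∀ v : p → ℂ, P.mulVec v = v := by
    intro v
    obtain ⟨w, hw⟩ := LinearMap.range_eq_top.mp hsurj v
    simp only [mulVecLin_apply] at hw
    rw [← hw, Matrix.mulVec_mulVec, hidem]
  ext i j
  have := congrFun (hfix (fun k => Z k j)) i
  simpa [Matrix.mul_apply, Matrix.mulVec, dotProduct] using this

lemma cancel_of_full_rank {m n : Type*} [Fintype m] [Fintype n]
    (A : Matrix m n ℂ) (Ad : Matrix n m ℂ) (hAd : IsMoorePenrose A Ad)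
    (hrank : A.rank = min (Fintype.card m) (Fintype.card n))
    (Z : Matrix m n ℂ) (h1 : Z * Ad = 0) (h2 : Ad * Z = 0) : Z = 0 := by
  obtain ⟨hp1, _, _, _⟩ := hAd
  rcases le_total (Fintype.card m) (Fintype.card n) with h | h
  · -- full row rank : A * Ad = projection of rank card m
    have hrm : A.rank = Fintype.card m := by rw [hrank, min_eq_left h]
    set P := A * Ad with hP
    have hidem : P * P = P := by
      rw [hP, show A * Ad * (A * Ad) = A * Ad * A * Ad by rw [Matrix.mul_assoc (A*Ad) A Ad], hp1]
    have hle1 : P.rank ≤ Fintype.card m := P.rank_le_card_width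
    have hle2 : Fintype.card m ≤ P.rank := by
      rw [← hrm]
      calc A.rank = (P * A).rank := by rw [hP, hp1]
        _ ≤ P.rank := Matrix.rank_mul_le_left P A
    have hPZ : P * Z = Z := proj_eq_of_full_rank P hidem (le_antisymm hle1 hle2) Z
    rw [← hPZ, hP, Matrix.mul_assoc, h2, Matrix.mul_zero]
  · -- full column rank : Ad * A = projection of rank card n
    have hrn : A.rank = Fintype.card n := by rw [hrank, min_eq_right h]
    set Q := Ad * A with hQ
    have hidem : Q * Q = Q := by
      rw [hQ, Matrix.mul_assoc, ← Matrix.mul_assoc A Ad A, hp1]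
    have hle1 : Q.rank ≤ Fintype.card n := Q.rank_le_card_width
    have hle2 : Fintype.card n ≤ Q.rank := by
      rw [← hrn]
      calc A.rank = (A * Q).rank := by rw [hQ, ← Matrix.mul_assoc, hp1]
        _ ≤ Q.rank := Matrix.rank_mul_le_right A Q
    have hidemT : Qᵀ * Qᵀ = Qᵀ := by rw [← Matrix.transpose_mul, hidem]
    have hrT : Qᵀ.rank = Fintype.card n := by
      rw [Matrix.rank_transpose]; exact le_antisymm hle1 hle2
    have hQZ : Qᵀ * Zᵀ = Zᵀ := proj_eq_of_full_rank Qᵀ hidemT hrT Zᵀ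
    have : (Z * Q)ᵀ = Zᵀ := by rw [Matrix.transpose_mul, hQZ]
    have hZQ : Z * Q = Z := by
      have := congrArg Matrix.transpose this
      simpa using this
    rw [← hZQ, hQ, ← Matrix.mul_assoc, h1, Matrix.zero_mul]

/-- if A has full rank, J is strictly convex on C^{m×n}. -/
theorem J_strictConvex {m n : Type*} [Fintype m] [Fintype n]
    (A : Matrix m n ℂ) (Ad : Matrix n m ℂ) (hAd : IsMoorePenrose A Ad)
    (hrank : A.rank = min (Fintype.card m) (Fintype.card n)) :
    StrictConvexOn ℝ (Set.univ : Set (Matrix m n ℂ)) (Jfun A Ad) := by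
  constructor
  · exact convex_univ
  · intro X _ Y _ hXY a b ha hb hab
    have hab' : (a : ℂ) + (b : ℂ) = 1 := by exact_mod_cast hab
    have hmid : a • X + b • Y - A = a • (X - A) + b • (Y - A) := by
      ext i j
      simp only [Matrix.add_apply, Matrix.sub_apply, Matrix.smul_apply, Complex.real_smul]
      linear_combination (A i j) * hab'
    have hU : (a • X + b • Y - A) * Ad = a • ((X - A) * Ad) + b • ((Y - A) * Ad) := by
      rw [hmid, Matrix.add_mul, Matrix.smul_mul, Matrix.smul_mul]
    have hV : Ad * (a • X + b • Y - A) = a • (Ad * (X - A)) + b • (Ad * (Y - A)) := by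
      rw [hmid, Matrix.mul_add, Matrix.mul_smul, Matrix.mul_smul]
    have hJ : Jfun A Ad (a • X + b • Y)
        = a * Jfun A Ad X + b * Jfun A Ad Y
          - (1 / 2) * (a * b) * (Fsq ((X - Y) * Ad) + Fsq (Ad * (X - Y))) := by
      have e1 : (X - A) * Ad - (Y - A) * Ad = (X - Y) * Ad := by
        rw [← Matrix.sub_mul]; congr 1; abel
      have e2 : Ad * (X - A) - Ad * (Y - A) = Ad * (X - Y) := by
        rw [← Matrix.mul_sub]; congr 1; abel
      simp only [Jfun, frob_sq, hU, hV, Fsq_combo a b hab, e1, e2]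
      ring
    rw [hJ]
    simp only [smul_eq_mul]
    have hpos : 0 < Fsq ((X - Y) * Ad) + Fsq (Ad * (X - Y)) := by
      rcases lt_or_eq_of_le (add_nonneg (Fsq_nonneg ((X - Y) * Ad)) (Fsq_nonneg (Ad * (X - Y)))) with h | h
      · exact h
      · exfalso
        have h1 : Fsq ((X - Y) * Ad) = 0 := by
          have := Fsq_nonneg ((X - Y) * Ad); have := Fsq_nonneg (Ad * (X - Y)); linarith
        have h2 : Fsq (Ad * (X - Y)) = 0 := by
          have := Fsq_nonneg ((X - Y) * Ad); linarith
        have hZ := cancel_of_full_rank A Ad hAd hrank (X - Y) (Fsq_eq_zero h1) (Fsq_eq_zero h2)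
        exact hXY (by rwa [sub_eq_zero] at hZ)
    nlinarith [mul_pos ha hb]
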